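/- Let an (n,M₁,M₂) code for the DM-MAC with degraded message sets be constant-composition with common joint type P, i.e., all codeword pairs (f₁(m₁,m₂), f₂(m₂)) have the same empirical joint distribution P on 𝒳₁×𝒳₂. Then for every γ > 0 and every pair (x₁,x₂) ∈ 𝒳₁ⁿ×𝒳₂ⁿ of joint type P, the average error probability satisfies ε_n ≥ 1 − Pr[ (1/n) Σ_{i=1}^n j(x_{1,i}, x_{2,i}, Y_i) ≥ ((1/n)log M₁, (1/n)log M₁ + (1/n)log M₂) − γ(1,1) ] − 2e^{−nγ}, where the inequality inside the probability is componentwise, Y ∼ Wⁿ(·|x₁,x₂), and the information density vector j is defined with respect to P; moreover this probability is the same for every (x₁,x₂) of joint type P. -/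

import Mathlib

open MeasureTheory ProbabilityTheory Filter
open scoped Classical BigOperators

noncomputable section

/-- A function on a finite alphabet is a probability distribution. -/
def IsDist {A : Type} [Fintype A] (P : A → ℝ) : Prop :=
  (∀ a, 0 ≤ P a) ∧ ∑ a, P a = 1

variable {X1 X2 Y : Type} [Fintype X1] [Fintype X2] [Fintype Y]

/-- The `n`-letter memoryless extension of the channel `W`. -/
def Wn (W : X1 → X2 → Y → ℝ) (n : ℕ) (x1 : Fin n → X1) (x2 : Fin n → X2)
    (y : Fin n → Y) : ℝ := ∏ i, W (x1 i) (x2 i) (y i)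

/-- An `(n, M1, M2)` code for the MAC with degraded message sets. -/
structure MACCode (X1 X2 Y : Type) (n M1 M2 : ℕ) where
  f1 : Fin M1 × Fin M2 → Fin n → X1
  f2 : Fin M2 → Fin n → X2
  dec : (Fin n → Y) → Fin M1 × Fin M2

/-- Error probability of the code for a fixed message pair `m`. -/
def errProb (W : X1 → X2 → Y → ℝ) {n M1 M2 : ℕ} (c : MACCode X1 X2 Y n M1 M2)
    (m : Fin M1 × Fin M2) : ℝ :=
  ∑ y : Fin n → Y, if c.dec y ≠ m then Wn W n (c.f1 m) (c.f2 m.2) y else 0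

/-- Average error probability of a code. -/
def avgErr (W : X1 → X2 → Y → ℝ) {n M1 M2 : ℕ} (c : MACCode X1 X2 Y n M1 M2) : ℝ :=
  (1 / ((M1 : ℝ) * (M2 : ℝ))) * ∑ m : Fin M1 × Fin M2, errProb W c m

/-- Output distribution `P_Y` induced by the input distribution `P` and the channel `W`. -/
def PYdist (W : X1 → X2 → Y → ℝ) (P : X1 × X2 → ℝ) (y : Y) : ℝ :=
  ∑ x : X1 × X2, P x * W x.1 x.2 y

/-- Conditional output distribution `P_{Y|X2}`. -/
def PYgX2 (W : X1 → X2 → Y → ℝ) (P : X1 × X2 → ℝ) (x2 : X2) (y : Y) : ℝ :=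
  (∑ x1, P (x1, x2) * W x1 x2 y) / (∑ x1, P (x1, x2))

/-- First information density `j₁(x₁,x₂,y) = log (W(y|x₁,x₂) / P_{Y|X₂}(y|x₂))`. -/
def j1 (W : X1 → X2 → Y → ℝ) (P : X1 × X2 → ℝ) (x1 : X1) (x2 : X2) (y : Y) : ℝ :=
  Real.log (W x1 x2 y / PYgX2 W P x2 y)

/-- Second information density `j₁₂(x₁,x₂,y) = log (W(y|x₁,x₂) / P_Y(y))`. -/
def j12 (W : X1 → X2 → Y → ℝ) (P : X1 × X2 → ℝ) (x1 : X1) (x2 : X2) (y : Y) : ℝ :=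
  Real.log (W x1 x2 y / PYdist W P y)

/-- The information density vector. -/
def jv (W : X1 → X2 → Y → ℝ) (P : X1 × X2 → ℝ) (x1 : X1) (x2 : X2) (y : Y) :
    Fin 2 → ℝ := ![j1 W P x1 x2 y, j12 W P x1 x2 y]

/-- Mutual information `I₁(P) = I(X₁;Y|X₂)`. -/
def I1 (W : X1 → X2 → Y → ℝ) (P : X1 × X2 → ℝ) : ℝ :=
  ∑ x : X1 × X2, ∑ y, P x * W x.1 x.2 y * j1 W P x.1 x.2 y

/-- Mutual information `I₁₂(P) = I(X₁,X₂;Y)`. -/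
def I12 (W : X1 → X2 → Y → ℝ) (P : X1 × X2 → ℝ) : ℝ :=
  ∑ x : X1 × X2, ∑ y, P x * W x.1 x.2 y * j12 W P x.1 x.2 y

/-- Conditional mean of the information density vector given `(x₁,x₂)`. -/
def condMean (W : X1 → X2 → Y → ℝ) (P : X1 × X2 → ℝ) (x1 : X1) (x2 : X2)
    (a : Fin 2) : ℝ := ∑ y, W x1 x2 y * jv W P x1 x2 y a

/-- Dispersion matrix `V(P) = E[Cov(j(X₁,X₂,Y) | X₁,X₂)]`. -/
def Vmat (W : X1 → X2 → Y → ℝ) (P : X1 × X2 → ℝ) : Matrix (Fin 2) (Fin 2) ℝ :=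
  fun a b => ∑ x : X1 × X2, P x * ∑ y, W x.1 x.2 y *
    ((jv W P x.1 x.2 y a - condMean W P x.1 x.2 a) *
     (jv W P x.1 x.2 y b - condMean W P x.1 x.2 b))

/-- The capacity region of the DM-MAC with degraded message sets. -/
def CapRegion (W : X1 → X2 → Y → ℝ) : Set (ℝ × ℝ) :=
  {R | 0 ≤ R.1 ∧ 0 ≤ R.2 ∧ ∃ P : X1 × X2 → ℝ, IsDist P ∧
    R.1 ≤ I1 W P ∧ R.1 + R.2 ≤ I12 W P}

end

noncomputable section

/-- The standard Gaussian measure on `ℝ²`. -/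
def stdGaussian2 : Measure (Fin 2 → ℝ) :=
  MeasureTheory.Measure.pi fun _ => gaussianReal 0 1

/-- `Ψ(z; V)`: probability that a centered Gaussian vector with covariance `V`
(the law of `V^{1/2} Z` for standard Gaussian `Z`) lies in `{u : u₁ ≤ z₁, u₂ ≤ z₂}`. -/
def Psi (V : Matrix (Fin 2) (Fin 2) ℝ) (z : ℝ × ℝ) : ℝ :=
  if hV : V.PosSemidef then
    ((stdGaussian2.map (fun u => ((hV.1.eigenvectorUnitary : Matrix (Fin 2) (Fin 2) ℝ) *
      Matrix.diagonal ((RCLike.ofReal : ℝ → ℝ) ∘ (fun x => Real.sqrt x) ∘ hV.1.eigenvalues) *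
      (star hV.1.eigenvectorUnitary : Matrix (Fin 2) (Fin 2) ℝ)).mulVec u)) {w | w 0 ≤ z.1 ∧ w 1 ≤ z.2}).toReal
  else 0

/-- `Ψ⁻¹(V, ε) = {z ∈ ℝ² : Ψ(-z₁, -z₂; V) ≥ 1 - ε}`. -/
def PsiInv (V : Matrix (Fin 2) (Fin 2) ℝ) (ε : ℝ) : Set (ℝ × ℝ) :=
  {z | 1 - ε ≤ Psi V (-z.1, -z.2)}

/-- The standard normal CDF `Φ`. -/
def Phi (x : ℝ) : ℝ := ((gaussianReal 0 1) (Set.Iic x)).toReal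

/-- The inverse `Φ⁻¹` of the standard normal CDF. -/
def PhiInv (ε : ℝ) : ℝ := sSup {x | Phi x ≤ ε}

end
noncomputable section
variable {X1 X2 Y : Type} [Fintype X1] [Fintype X2] [Fintype Y]

/-- Empirical joint distribution (joint type) of a pair of sequences. -/
def empDist {n : ℕ} (x1 : Fin n → X1) (x2 : Fin n → X2) : X1 × X2 → ℝ :=
  fun a => ((Finset.univ.filter fun i : Fin n => (x1 i, x2 i) = a).card : ℝ) / n

/-- The probability, under `Y ∼ Wⁿ(·|x₁,x₂)`, that the normalized sums of the two
information densities componentwise exceed the rates minus `γ`. -/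
def vhProb (W : X1 → X2 → Y → ℝ) (P : X1 × X2 → ℝ) (n M1 M2 : ℕ) (γ : ℝ)
    (x1 : Fin n → X1) (x2 : Fin n → X2) : ℝ :=
  ∑ y : Fin n → Y,
    if ((1 / (n : ℝ)) * Real.log M1 - γ ≤ (1 / (n : ℝ)) * ∑ i, j1 W P (x1 i) (x2 i) (y i) ∧
        (1 / (n : ℝ)) * Real.log M1 + (1 / (n : ℝ)) * Real.log M2 - γ ≤
          (1 / (n : ℝ)) * ∑ i, j12 W P (x1 i) (x2 i) (y i))
    then Wn W n x1 x2 y else 0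

/-! ### Auxiliary lemmas -/

lemma sum_prod_fn {n : ℕ} (q : Fin n → Y → ℝ) :
    ∑ y : Fin n → Y, ∏ i, q i (y i) = ∏ i, ∑ b, q i b := by
  rw [← Finset.sum_prod_piFinset, Fintype.piFinset_univ]

lemma Wn_nonneg (W : X1 → X2 → Y → ℝ) (hW : ∀ a b, IsDist (W a b)) {n : ℕ}
    (x1 : Fin n → X1) (x2 : Fin n → X2) (y : Fin n → Y) : 0 ≤ Wn W n x1 x2 y :=
  Finset.prod_nonneg fun i _ => (hW _ _).1 _

lemma Wn_sum_one (W : X1 → X2 → Y → ℝ) (hW : ∀ a b, IsDist (W a b)) {n : ℕ}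
    (x1 : Fin n → X1) (x2 : Fin n → X2) : ∑ y : Fin n → Y, Wn W n x1 x2 y = 1 := by
  unfold Wn
  rw [sum_prod_fn (fun i b => W (x1 i) (x2 i) b)]
  simp [(hW _ _).2]

lemma empDist_nonneg {n : ℕ} (x1 : Fin n → X1) (x2 : Fin n → X2) (a : X1 × X2) :
    0 ≤ empDist x1 x2 a := by
  unfold empDist; positivity

lemma empDist_pos {n : ℕ} (x1 : Fin n → X1) (x2 : Fin n → X2) (i : Fin n) :
    0 < empDist x1 x2 (x1 i, x2 i) := by
  unfold empDist
  apply div_pos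
  · have hi : i ∈ Finset.univ.filter fun j : Fin n => (x1 j, x2 j) = (x1 i, x2 i) := by simp
    exact_mod_cast Finset.card_pos.mpr ⟨i, hi⟩
  · exact_mod_cast i.pos

lemma empDist_sum {n : ℕ} (hn : 0 < n) (x1 : Fin n → X1) (x2 : Fin n → X2) :
    ∑ a, empDist x1 x2 a = 1 := by
  unfold empDist
  rw [← Finset.sum_div]
  rw [div_eq_one_iff_eq (by exact_mod_cast hn.ne')]
  have := Finset.card_eq_sum_card_fiberwise
    (f := fun i : Fin n => (x1 i, x2 i)) (s := Finset.univ) (t := Finset.univ)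
    (fun x _ => Finset.mem_univ _)
  rw [Finset.card_univ, Fintype.card_fin] at this
  exact_mod_cast this.symm

lemma empDist_isDist {n : ℕ} (hn : 0 < n) (x1 : Fin n → X1) (x2 : Fin n → X2) :
    IsDist (empDist x1 x2) :=
  ⟨empDist_nonneg x1 x2, empDist_sum hn x1 x2⟩

lemma PYdist_nonneg (W : X1 → X2 → Y → ℝ) (hW : ∀ a b, IsDist (W a b))
    {P : X1 × X2 → ℝ} (hP : ∀ a, 0 ≤ P a) (y : Y) : 0 ≤ PYdist W P y :=
  Finset.sum_nonneg fun x _ => mul_nonneg (hP x) ((hW _ _).1 y)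

lemma PYdist_pos (W : X1 → X2 → Y → ℝ) (hW : ∀ a b, IsDist (W a b))
    {P : X1 × X2 → ℝ} (hP : ∀ a, 0 ≤ P a) {a1 : X1} {a2 : X2} {y : Y}
    (hx : 0 < P (a1, a2)) (hw : 0 < W a1 a2 y) : 0 < PYdist W P y :=
  lt_of_lt_of_le (mul_pos hx hw)
    (Finset.single_le_sum (f := fun x : X1 × X2 => P x * W x.1 x.2 y)
      (fun x _ => mul_nonneg (hP x) ((hW _ _).1 y)) (Finset.mem_univ (a1, a2)))

lemma PYdist_sum_one (W : X1 → X2 → Y → ℝ) (hW : ∀ a b, IsDist (W a b))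
    {P : X1 × X2 → ℝ} (hP : IsDist P) : ∑ y, PYdist W P y = 1 := by
  unfold PYdist
  rw [Finset.sum_comm]
  calc ∑ x : X1 × X2, ∑ y, P x * W x.1 x.2 y
      = ∑ x : X1 × X2, P x * ∑ y, W x.1 x.2 y := by
        simp [Finset.mul_sum]
    _ = 1 := by simp [(hW _ _).2, hP.2]

lemma PYgX2_nonneg (W : X1 → X2 → Y → ℝ) (hW : ∀ a b, IsDist (W a b))
    {P : X1 × X2 → ℝ} (hP : ∀ a, 0 ≤ P a) (a2 : X2) (y : Y) : 0 ≤ PYgX2 W P a2 y :=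
  div_nonneg (Finset.sum_nonneg fun x _ => mul_nonneg (hP _) ((hW _ _).1 y))
    (Finset.sum_nonneg fun x _ => hP _)

lemma PYgX2_pos (W : X1 → X2 → Y → ℝ) (hW : ∀ a b, IsDist (W a b))
    {P : X1 × X2 → ℝ} (hP : ∀ a, 0 ≤ P a) {a1 : X1} {a2 : X2} {y : Y}
    (hx : 0 < P (a1, a2)) (hw : 0 < W a1 a2 y) : 0 < PYgX2 W P a2 y := by
  apply div_pos
  · exact lt_of_lt_of_le (mul_pos hx hw)
      (Finset.single_le_sum (f := fun b1 : X1 => P (b1, a2) * W b1 a2 y)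
        (fun b _ => mul_nonneg (hP _) ((hW _ _).1 y)) (Finset.mem_univ a1))
  · exact lt_of_lt_of_le hx
      (Finset.single_le_sum (f := fun b1 : X1 => P (b1, a2))
        (fun b _ => hP _) (Finset.mem_univ a1))

lemma PYgX2_sum_one (W : X1 → X2 → Y → ℝ) (hW : ∀ a b, IsDist (W a b))
    {P : X1 × X2 → ℝ} {a2 : X2} (hd : 0 < ∑ b1, P (b1, a2)) :
    ∑ y, PYgX2 W P a2 y = 1 := by
  unfold PYgX2
  rw [← Finset.sum_div, Finset.sum_comm]
  rw [div_eq_one_iff_eq hd.ne']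
  calc ∑ b1, ∑ y, P (b1, a2) * W b1 a2 y
      = ∑ b1, P (b1, a2) * ∑ y, W b1 a2 y := by simp [Finset.mul_sum]
    _ = ∑ b1, P (b1, a2) := by simp [(hW _ _).2]

/-- Change-of-measure bound. -/
lemma com_bound {n : ℕ} (W : X1 → X2 → Y → ℝ) (hW : ∀ a b, IsDist (W a b))
    (u : Fin n → X1) (v : Fin n → X2) (g : Fin n → Y → ℝ)
    (hg0 : ∀ i b, 0 ≤ g i b)
    (hgpos : ∀ i b, 0 < W (u i) (v i) b → 0 < g i b)
    (T : ℝ) (S : (Fin n → Y) → Prop) (E : (Fin n → Y) → Prop)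
    (hE : ∀ y, E y → 0 < Wn W n u v y →
      ∑ i, Real.log (W (u i) (v i) (y i) / g i (y i)) < T) :
    ∑ y : Fin n → Y, (if S y ∧ E y then Wn W n u v y else 0)
      ≤ Real.exp T * ∑ y : Fin n → Y, (if S y then ∏ i, g i (y i) else 0) := by
  rw [Finset.mul_sum]
  apply Finset.sum_le_sum
  intro y _
  by_cases hS : S y
  · have hgy : 0 ≤ ∏ i, g i (y i) := Finset.prod_nonneg fun i _ => hg0 i _
    by_cases hEy : E y
    · simp only [hS, hEy, and_self, if_true]
      rcases (Wn_nonneg W hW u v y).eq_or_lt with h0 | hpos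
      · rw [← h0]; positivity
      · have hWpos : ∀ i, 0 < W (u i) (v i) (y i) := by
          intro i
          rcases ((hW (u i) (v i)).1 (y i)).eq_or_lt with h | h
          · exfalso
            have : Wn W n u v y = 0 :=
              Finset.prod_eq_zero (Finset.mem_univ i) h.symm
            rw [this] at hpos; exact lt_irrefl _ hpos
          · exact h
        have hgp : ∀ i, 0 < g i (y i) := fun i => hgpos i _ (hWpos i)
        have hsum := hE y hEy hpos
        have hsum' : ∑ i, (Real.log (W (u i) (v i) (y i)) - Real.log (g i (y i))) < T := by
          refine lt_of_le_of_lt (le_of_eq ?_) hsum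
          refine Finset.sum_congr rfl fun i _ => ?_
          rw [Real.log_div (hWpos i).ne' (hgp i).ne']
        rw [Finset.sum_sub_distrib] at hsum'
        have hWn : Wn W n u v y = Real.exp (∑ i, Real.log (W (u i) (v i) (y i))) := by
          rw [Real.exp_sum]
          exact Finset.prod_congr rfl fun i _ => (Real.exp_log (hWpos i)).symm
        have hg : ∏ i, g i (y i) = Real.exp (∑ i, Real.log (g i (y i))) := by
          rw [Real.exp_sum]
          exact Finset.prod_congr rfl fun i _ => (Real.exp_log (hgp i)).symm
        rw [hWn, hg, ← Real.exp_add]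
        exact (Real.exp_le_exp.mpr (by linarith)).trans_eq rfl
    · simp only [hS, hEy, and_false, if_false, if_true]
      positivity
  · simp [hS]

/-- From equal fiber cardinalities, produce a permutation matching two tuples. -/
lemma exists_perm {n : ℕ} {α : Type*} (g g' : Fin n → α)
    (hcard : ∀ a : α, Nat.card {i // g' i = a} = Nat.card {i // g i = a}) :
    ∃ σ : Equiv.Perm (Fin n), ∀ i, g' i = g (σ i) := by
  let e : ∀ a, {i // g' i = a} ≃ {i // g i = a} := fun a =>
    Fintype.equivOfCardEq (by
      have := hcard a
      rwa [Nat.card_eq_fintype_card, Nat.card_eq_fintype_card] at this)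
  refine ⟨(Equiv.sigmaFiberEquiv g').symm.trans
    ((Equiv.sigmaCongrRight e).trans (Equiv.sigmaFiberEquiv g)), fun i => ?_⟩
  exact ((e (g' i)) ⟨i, rfl⟩).2.symm

lemma vhProb_eq_of_empDist_eq (W : X1 → X2 → Y → ℝ) (P : X1 × X2 → ℝ)
    {n : ℕ} (M1 M2 : ℕ) (γ : ℝ) (x1 x1' : Fin n → X1) (x2 x2' : Fin n → X2)
    (h : empDist x1 x2 = empDist x1' x2') :
    vhProb W P n M1 M2 γ x1 x2 = vhProb W P n M1 M2 γ x1' x2' := by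
  have hc : ∀ a : X1 × X2,
      Nat.card {i // (x1' i, x2' i) = a} = Nat.card {i // (x1 i, x2 i) = a} := by
    intro a
    rw [Nat.card_eq_fintype_card, Nat.card_eq_fintype_card,
      Fintype.card_subtype, Fintype.card_subtype]
    have h' := congrFun h a
    unfold empDist at h'
    rcases Nat.eq_zero_or_pos n with hn | hn
    · subst hn
      simp
    · have hne : (n : ℝ) ≠ 0 := by exact_mod_cast hn.ne'
      field_simp at h'
      exact_mod_cast h'.symm
  obtain ⟨σ, hσ⟩ := exists_perm (fun i => (x1 i, x2 i)) (fun i => (x1' i, x2' i)) hc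
  have h1 : ∀ i, x1' i = x1 (σ i) := fun i => congrArg Prod.fst (hσ i)
  have h2 : ∀ i, x2' i = x2 (σ i) := fun i => congrArg Prod.snd (hσ i)
  unfold vhProb Wn
  refine Fintype.sum_equiv (Equiv.arrowCongr σ.symm (Equiv.refl Y)) _ _ fun y => ?_
  have hy : ∀ i, (Equiv.arrowCongr σ.symm (Equiv.refl Y)) y i = y (σ i) := by
    intro i; simp [Equiv.arrowCongr]
  have e1 : ∑ i, j1 W P (x1' i) (x2' i) ((Equiv.arrowCongr σ.symm (Equiv.refl Y)) y i)
      = ∑ i, j1 W P (x1 i) (x2 i) (y i) := by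
    rw [Finset.sum_congr rfl fun i _ => by rw [hy i, h1 i, h2 i]]
    exact Equiv.sum_comp σ (fun i => j1 W P (x1 i) (x2 i) (y i))
  have e2 : ∑ i, j12 W P (x1' i) (x2' i) ((Equiv.arrowCongr σ.symm (Equiv.refl Y)) y i)
      = ∑ i, j12 W P (x1 i) (x2 i) (y i) := by
    rw [Finset.sum_congr rfl fun i _ => by rw [hy i, h1 i, h2 i]]
    exact Equiv.sum_comp σ (fun i => j12 W P (x1 i) (x2 i) (y i))
  have e3 : ∏ i, W (x1' i) (x2' i) ((Equiv.arrowCongr σ.symm (Equiv.refl Y)) y i)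
      = ∏ i, W (x1 i) (x2 i) (y i) := by
    rw [Finset.prod_congr rfl fun i _ => by rw [hy i, h1 i, h2 i]]
    exact Equiv.prod_comp σ (fun i => W (x1 i) (x2 i) (y i))
  rw [e1, e2, e3]


lemma sum_ite_ext {α : Type*} [Fintype α] (p q : α → Prop) [∀ a, Decidable (p a)]
    [∀ a, Decidable (q a)] (h : ∀ a, p a ↔ q a) (f : α → ℝ) :
    ∑ a, (if p a then f a else 0) = ∑ a, (if q a then f a else 0) :=
  Finset.sum_congr rfl fun a _ => if_congr (h a) rfl rfl

def Cond1 (W : X1 → X2 → Y → ℝ) (P : X1 × X2 → ℝ) (n M1 : ℕ) (γ : ℝ)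
    (u : Fin n → X1) (v : Fin n → X2) (y : Fin n → Y) : Prop :=
  (1 / (n : ℝ)) * Real.log M1 - γ ≤ (1 / (n : ℝ)) * ∑ i, j1 W P (u i) (v i) (y i)

def Cond2 (W : X1 → X2 → Y → ℝ) (P : X1 × X2 → ℝ) (n M1 M2 : ℕ) (γ : ℝ)
    (u : Fin n → X1) (v : Fin n → X2) (y : Fin n → Y) : Prop :=
  (1 / (n : ℝ)) * Real.log M1 + (1 / (n : ℝ)) * Real.log M2 - γ ≤
    (1 / (n : ℝ)) * ∑ i, j12 W P (u i) (v i) (y i)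

lemma vhProb_eq (W : X1 → X2 → Y → ℝ) (P : X1 × X2 → ℝ) (n M1 M2 : ℕ) (γ : ℝ)
    (u : Fin n → X1) (v : Fin n → X2) :
    vhProb W P n M1 M2 γ u v
      = ∑ y : Fin n → Y, if Cond1 W P n M1 γ u v y ∧ Cond2 W P n M1 M2 γ u v y
          then Wn W n u v y else 0 := rfl

lemma unscale {n : ℕ} (hn : 0 < n) {γ L s : ℝ} (h : ¬(1 / (n : ℝ) * L - γ ≤ 1 / (n : ℝ) * s)) :
    s < L + -((n : ℝ) * γ) := by
  have hnR : (0:ℝ) < n := by exact_mod_cast hn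
  have h2 := (mul_lt_mul_iff_right₀ hnR).mpr (not_le.mp h)
  have e1 : (n:ℝ) * (1/(n:ℝ) * s) = s := by field_simp
  have e3 : (n:ℝ) * (1/(n:ℝ) * L) = L := by field_simp
  rw [e1, mul_sub, e3] at h2
  linarith

/-- Per-message decomposition of the complement event. -/
lemma message_bound (W : X1 → X2 → Y → ℝ) (hW : ∀ a b, IsDist (W a b))
    {n M1 M2 : ℕ} (c : MACCode X1 X2 Y n M1 M2) (P : X1 × X2 → ℝ) (γ : ℝ)
    (m : Fin M1 × Fin M2) :
    1 - vhProb W P n M1 M2 γ (c.f1 m) (c.f2 m.2) ≤ errProb W c m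
      + (∑ y : Fin n → Y, if c.dec y = m ∧ ¬ Cond1 W P n M1 γ (c.f1 m) (c.f2 m.2) y
          then Wn W n (c.f1 m) (c.f2 m.2) y else 0)
      + (∑ y : Fin n → Y, if c.dec y = m ∧ ¬ Cond2 W P n M1 M2 γ (c.f1 m) (c.f2 m.2) y
          then Wn W n (c.f1 m) (c.f2 m.2) y else 0) := by
  have hone := Wn_sum_one W hW (c.f1 m) (c.f2 m.2)
  rw [vhProb_eq]
  unfold errProb
  rw [← hone, ← Finset.sum_sub_distrib, ← Finset.sum_add_distrib, ← Finset.sum_add_distrib]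
  apply Finset.sum_le_sum
  intro y _
  have hA := Wn_nonneg W hW (c.f1 m) (c.f2 m.2) y
  by_cases hd : c.dec y = m <;>
    by_cases h1 : Cond1 W P n M1 γ (c.f1 m) (c.f2 m.2) y <;>
    by_cases h2 : Cond2 W P n M1 M2 γ (c.f1 m) (c.f2 m.2) y <;>
    simp [hd, h1, h2] <;> linarith

lemma Gsum_bound (W : X1 → X2 → Y → ℝ) (hW : ∀ a b, IsDist (W a b))
    {n M1 M2 : ℕ} (hn : 0 < n) (hM1 : 0 < M1)
    (c : MACCode X1 X2 Y n M1 M2) (P : X1 × X2 → ℝ)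
    (hcc : ∀ m : Fin M1 × Fin M2, empDist (c.f1 m) (c.f2 m.2) = P) (γ : ℝ) :
    ∑ m : Fin M1 × Fin M2, (∑ y : Fin n → Y,
        if c.dec y = m ∧ ¬ Cond1 W P n M1 γ (c.f1 m) (c.f2 m.2) y
          then Wn W n (c.f1 m) (c.f2 m.2) y else 0)
      ≤ (M2 : ℝ) * ((M1 : ℝ) * Real.exp (-((n : ℝ) * γ))) := by
  have hM1R : (0:ℝ) < M1 := by exact_mod_cast hM1
  have hE : 0 ≤ Real.exp (-((n : ℝ) * γ)) := (Real.exp_pos _).le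
  rcases Nat.eq_zero_or_pos M2 with hM2 | hM2
  · subst hM2
    rw [Finset.univ_eq_empty, Finset.sum_empty]
    positivity
  have hP0 : ∀ a, 0 ≤ P a := by
    rw [← hcc ((⟨0, hM1⟩ : Fin M1), (⟨0, hM2⟩ : Fin M2))]; exact empDist_nonneg _ _
  set T : ℝ := Real.log M1 + -((n : ℝ) * γ) with hT
  have hexp : Real.exp T = (M1 : ℝ) * Real.exp (-((n : ℝ) * γ)) := by
    rw [hT, Real.exp_add, Real.exp_log hM1R]
  rw [Fintype.sum_prod_type_right]
  have inner : ∀ m2 : Fin M2, ∑ m1 : Fin M1, (∑ y : Fin n → Y,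
      if c.dec y = (m1, m2) ∧ ¬ Cond1 W P n M1 γ (c.f1 (m1, m2)) (c.f2 (m1, m2).2) y
        then Wn W n (c.f1 (m1, m2)) (c.f2 (m1, m2).2) y else 0)
      ≤ (M1 : ℝ) * Real.exp (-((n : ℝ) * γ)) := by
    intro m2
    have hQnn : ∀ y : Fin n → Y, 0 ≤ ∏ i, PYgX2 W P (c.f2 m2 i) (y i) :=
      fun y => Finset.prod_nonneg fun i _ => PYgX2_nonneg W hW hP0 _ _
    have hQ1 : ∑ m1 : Fin M1, ∑ y : Fin n → Y,
        (if c.dec y = (m1, m2) then ∏ i, PYgX2 W P (c.f2 m2 i) (y i) else 0) ≤ 1 := by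
      rw [Finset.sum_comm]
      have h1 : ∀ y : Fin n → Y, ∑ m1 : Fin M1,
          (if c.dec y = (m1, m2) then ∏ i, PYgX2 W P (c.f2 m2 i) (y i) else 0)
            ≤ ∏ i, PYgX2 W P (c.f2 m2 i) (y i) := by
        intro y
        have h2 : ∑ m1 : Fin M1,
            (if c.dec y = (m1, m2) then ∏ i, PYgX2 W P (c.f2 m2 i) (y i) else 0)
              ≤ ∑ m1 : Fin M1,
            (if m1 = (c.dec y).1 then ∏ i, PYgX2 W P (c.f2 m2 i) (y i) else 0) := by
          apply Finset.sum_le_sum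
          intro m1 _
          by_cases hd : c.dec y = (m1, m2)
          · rw [if_pos hd, if_pos (show m1 = (c.dec y).1 by rw [hd])]
          · rw [if_neg hd]
            split_ifs with h
            · exact hQnn y
            · exact le_refl 0
        refine h2.trans (le_of_eq ?_)
        rw [Finset.sum_ite_eq']
        simp
      refine (Finset.sum_le_sum fun y _ => h1 y).trans (le_of_eq ?_)
      rw [sum_prod_fn (fun i b => PYgX2 W P (c.f2 m2 i) b)]
      have hone : ∀ i : Fin n, ∑ b, PYgX2 W P (c.f2 m2 i) b = 1 := by
        intro i
        apply PYgX2_sum_one W hW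
        have hp : 0 < P (c.f1 ((⟨0, hM1⟩ : Fin M1), m2) i, c.f2 m2 i) := by
          have := empDist_pos (c.f1 ((⟨0, hM1⟩ : Fin M1), m2)) (c.f2 m2) i
          rwa [hcc ((⟨0, hM1⟩ : Fin M1), m2)] at this
        exact lt_of_lt_of_le hp (Finset.single_le_sum
          (f := fun b1 : X1 => P (b1, c.f2 m2 i)) (fun b _ => hP0 _) (Finset.mem_univ _))
      simp [hone]
    have step1 : ∀ m1 : Fin M1, (∑ y : Fin n → Y,
        if c.dec y = (m1, m2) ∧ ¬ Cond1 W P n M1 γ (c.f1 (m1, m2)) (c.f2 (m1, m2).2) y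
          then Wn W n (c.f1 (m1, m2)) (c.f2 (m1, m2).2) y else 0)
        ≤ Real.exp T * ∑ y : Fin n → Y,
            (if c.dec y = (m1, m2) then ∏ i, PYgX2 W P (c.f2 m2 i) (y i) else 0) := by
      intro m1
      have hcb := com_bound W hW (c.f1 (m1, m2)) (c.f2 (m1, m2).2)
        (fun i b => PYgX2 W P (c.f2 m2 i) b)
        (fun i b => PYgX2_nonneg W hW hP0 _ _)
        (fun i b hw => PYgX2_pos W hW hP0 (by
          have := empDist_pos (c.f1 (m1, m2)) (c.f2 (m1, m2).2) i
          rwa [hcc (m1, m2)] at this) hw)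
        T (fun y => c.dec y = (m1, m2))
        (fun y => ¬ Cond1 W P n M1 γ (c.f1 (m1, m2)) (c.f2 (m1, m2).2) y)
        (by
          intro y hEy _
          unfold Cond1 at hEy
          have h2 := unscale hn hEy
          rw [hT]
          simpa [j1] using h2)
      convert hcb using 2 <;> congr!
    refine (Finset.sum_le_sum fun m1 _ => step1 m1).trans ?_
    rw [← Finset.mul_sum]
    calc Real.exp T * ∑ m1 : Fin M1, ∑ y : Fin n → Y,
          (if c.dec y = (m1, m2) then ∏ i, PYgX2 W P (c.f2 m2 i) (y i) else 0)
        ≤ Real.exp T * 1 := by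
          apply mul_le_mul_of_nonneg_left hQ1 (Real.exp_pos _).le
      _ = (M1 : ℝ) * Real.exp (-((n : ℝ) * γ)) := by rw [mul_one, hexp]
  refine (Finset.sum_le_sum fun m2 _ => inner m2).trans (le_of_eq ?_)
  rw [Finset.sum_const, Finset.card_univ, Fintype.card_fin, nsmul_eq_mul]

lemma Hsum_bound (W : X1 → X2 → Y → ℝ) (hW : ∀ a b, IsDist (W a b))
    {n M1 M2 : ℕ} (hn : 0 < n) (hM1 : 0 < M1) (hM2 : 0 < M2)
    (c : MACCode X1 X2 Y n M1 M2) (P : X1 × X2 → ℝ)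
    (hcc : ∀ m : Fin M1 × Fin M2, empDist (c.f1 m) (c.f2 m.2) = P) (γ : ℝ) :
    ∑ m : Fin M1 × Fin M2, (∑ y : Fin n → Y,
        if c.dec y = m ∧ ¬ Cond2 W P n M1 M2 γ (c.f1 m) (c.f2 m.2) y
          then Wn W n (c.f1 m) (c.f2 m.2) y else 0)
      ≤ (M1 : ℝ) * (M2 : ℝ) * Real.exp (-((n : ℝ) * γ)) := by
  have hM1R : (0:ℝ) < M1 := by exact_mod_cast hM1
  have hM2R : (0:ℝ) < M2 := by exact_mod_cast hM2
  have hP0 : ∀ a, 0 ≤ P a := by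
    rw [← hcc ((⟨0, hM1⟩ : Fin M1), (⟨0, hM2⟩ : Fin M2))]; exact empDist_nonneg _ _
  have hPD : IsDist P := by
    rw [← hcc ((⟨0, hM1⟩ : Fin M1), (⟨0, hM2⟩ : Fin M2))]; exact empDist_isDist hn _ _
  set T : ℝ := (Real.log M1 + Real.log M2) + -((n : ℝ) * γ) with hT
  have hexp : Real.exp T = (M1 : ℝ) * (M2 : ℝ) * Real.exp (-((n : ℝ) * γ)) := by
    rw [hT, Real.exp_add, Real.exp_add, Real.exp_log hM1R, Real.exp_log hM2R]
  have step1 : ∀ m : Fin M1 × Fin M2, (∑ y : Fin n → Y,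
      if c.dec y = m ∧ ¬ Cond2 W P n M1 M2 γ (c.f1 m) (c.f2 m.2) y
        then Wn W n (c.f1 m) (c.f2 m.2) y else 0)
      ≤ Real.exp T * ∑ y : Fin n → Y,
          (if c.dec y = m then ∏ i, PYdist W P (y i) else 0) := by
    intro m
    have hcb := com_bound W hW (c.f1 m) (c.f2 m.2)
      (fun i b => PYdist W P b)
      (fun i b => PYdist_nonneg W hW hP0 _)
      (fun i b hw => PYdist_pos W hW hP0 (by
        have := empDist_pos (c.f1 m) (c.f2 m.2) i
        rwa [hcc m] at this) hw)
      T (fun y => c.dec y = m)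
      (fun y => ¬ Cond2 W P n M1 M2 γ (c.f1 m) (c.f2 m.2) y)
      (by
        intro y hEy _
        unfold Cond2 at hEy
        rw [← mul_add] at hEy
        have h2 := unscale hn hEy
        rw [hT]
        simpa [j12] using h2)
    convert hcb using 2 <;> congr!
  refine (Finset.sum_le_sum fun m _ => step1 m).trans ?_
  rw [← Finset.mul_sum]
  have hQ : ∑ m : Fin M1 × Fin M2, ∑ y : Fin n → Y,
      (if c.dec y = m then ∏ i, PYdist W P (y i) else 0) = 1 := by
    rw [Finset.sum_comm]
    have h1 : ∀ y : Fin n → Y, ∑ m : Fin M1 × Fin M2,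
        (if c.dec y = m then ∏ i, PYdist W P (y i) else 0) = ∏ i, PYdist W P (y i) := by
      intro y
      rw [Finset.sum_ite_eq]
      simp
    rw [Finset.sum_congr rfl fun y _ => h1 y, sum_prod_fn (fun i b => PYdist W P b)]
    simp [PYdist_sum_one W hW hPD]
  rw [hQ, mul_one, hexp]


/-- **Verdú–Han-type converse bound** for constant-composition codes for the DM-MAC with
degraded message sets: for any `γ > 0` and any `(x₁,x₂)` of the common joint type `P`,
`ε_n ≥ 1 - Pr[(1/n)Σᵢ j(x_{1,i},x_{2,i},Y_i) ≥ R_n - γ𝟏] - 2e^{-nγ}`, and the probability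
is the same for all pairs of joint type `P`. -/
theorem vh_converse_constant_composition
    (W : X1 → X2 → Y → ℝ) (hW : ∀ x1 x2, IsDist (W x1 x2))
    {n M1 M2 : ℕ} (c : MACCode X1 X2 Y n M1 M2) (P : X1 × X2 → ℝ)
    (hcc : ∀ m : Fin M1 × Fin M2, empDist (c.f1 m) (c.f2 m.2) = P)
    (γ : ℝ) (hγ : 0 < γ) :
    (∀ (x1 : Fin n → X1) (x2 : Fin n → X2), empDist x1 x2 = P →
      1 - vhProb W P n M1 M2 γ x1 x2 - 2 * Real.exp (-(n * γ)) ≤ avgErr W c) ∧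
    (∀ (x1 : Fin n → X1) (x2 : Fin n → X2) (x1' : Fin n → X1) (x2' : Fin n → X2),
      empDist x1 x2 = P → empDist x1' x2' = P →
      vhProb W P n M1 M2 γ x1 x2 = vhProb W P n M1 M2 γ x1' x2') := by
  constructor
  case right =>
    intro x1 x2 x1' x2' h h'
    exact vhProb_eq_of_empDist_eq W P M1 M2 γ x1 x1' x2 x2' (h.trans h'.symm)
  intro x1 x2 hx
  have hErr0 : ∀ m, 0 ≤ errProb W c m := fun m =>
    Finset.sum_nonneg fun y _ => by
      by_cases h : c.dec y ≠ m <;> simp [h, Wn_nonneg W hW]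
  have hAvg0 : 0 ≤ avgErr W c :=
    mul_nonneg (by positivity) (Finset.sum_nonneg fun m _ => hErr0 m)
  rcases Nat.eq_zero_or_pos n with hn | hn
  · subst hn
    have hvh : vhProb W P 0 M1 M2 γ x1 x2 = 1 := by
      rw [vhProb_eq]
      have h1 : ∀ y : Fin 0 → Y,
          (if Cond1 W P 0 M1 γ x1 x2 y ∧ Cond2 W P 0 M1 M2 γ x1 x2 y
            then Wn W 0 x1 x2 y else 0) = 1 := by
        intro y
        rw [if_pos, Wn]
        · simp
        · constructor
          · unfold Cond1; simp; linarith
          · unfold Cond2; simp; linarith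
      rw [Finset.sum_congr rfl fun y _ => h1 y, Finset.sum_const, Finset.card_univ]
      simp
    rw [hvh]
    have : Real.exp (-((0:ℕ) * γ)) = 1 := by norm_num
    rw [this]
    linarith
  -- main case : n > 0
  have hP0 : ∀ a, 0 ≤ P a := by rw [← hx]; exact empDist_nonneg x1 x2
  have hYne : Nonempty Y := by
    by_contra hY
    have h0 := (hW (x1 ⟨0, hn⟩) (x2 ⟨0, hn⟩)).2
    have : IsEmpty Y := not_nonempty_iff.mp hY
    rw [Finset.univ_eq_empty, Finset.sum_empty] at h0
    exact zero_ne_one h0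
  obtain ⟨y0⟩ := hYne
  have hM1 : 0 < M1 := (c.dec fun _ => y0).1.pos
  have hM2 : 0 < M2 := (c.dec fun _ => y0).2.pos
  have hM1R : (0:ℝ) < M1 := by exact_mod_cast hM1
  have hM2R : (0:ℝ) < M2 := by exact_mod_cast hM2
  have hkey : ∀ m : Fin M1 × Fin M2,
      1 - vhProb W P n M1 M2 γ x1 x2 ≤ errProb W c m
        + ((∑ y : Fin n → Y, if c.dec y = m ∧ ¬ Cond1 W P n M1 γ (c.f1 m) (c.f2 m.2) y
            then Wn W n (c.f1 m) (c.f2 m.2) y else 0)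
        + (∑ y : Fin n → Y, if c.dec y = m ∧ ¬ Cond2 W P n M1 M2 γ (c.f1 m) (c.f2 m.2) y
            then Wn W n (c.f1 m) (c.f2 m.2) y else 0)) := by
    intro m
    have hv : vhProb W P n M1 M2 γ (c.f1 m) (c.f2 m.2) = vhProb W P n M1 M2 γ x1 x2 :=
      vhProb_eq_of_empDist_eq W P M1 M2 γ (c.f1 m) x1 (c.f2 m.2) x2 ((hcc m).trans hx.symm)
    have := message_bound W hW c P γ m
    rw [hv] at this
    linarith
  have hsum := Finset.sum_le_sum (fun m (_ : m ∈ Finset.univ) => hkey m)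
  rw [Finset.sum_const, Finset.card_univ, Fintype.card_prod, Fintype.card_fin,
    Fintype.card_fin, Finset.sum_add_distrib, Finset.sum_add_distrib] at hsum
  have hG := Gsum_bound W hW hn hM1 c P hcc γ
  have hH := Hsum_bound W hW hn hM1 hM2 c P hcc γ
  have hsum2 : ((M1 * M2 : ℕ) : ℝ) * (1 - vhProb W P n M1 M2 γ x1 x2)
      ≤ (∑ m : Fin M1 × Fin M2, errProb W c m)
        + ((M2 : ℝ) * ((M1 : ℝ) * Real.exp (-((n : ℝ) * γ)))
          + (M1 : ℝ) * (M2 : ℝ) * Real.exp (-((n : ℝ) * γ))) := by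
    rw [nsmul_eq_mul] at hsum
    linarith
  push_cast at hsum2
  have hfinal : ((M1 : ℝ) * (M2 : ℝ)) * (1 - vhProb W P n M1 M2 γ x1 x2
      - 2 * Real.exp (-((n : ℝ) * γ))) ≤ ∑ m : Fin M1 × Fin M2, errProb W c m := by
    nlinarith [hsum2]
  have hN : (0:ℝ) < (M1:ℝ) * (M2:ℝ) := mul_pos hM1R hM2R
  unfold avgErr
  calc 1 - vhProb W P n M1 M2 γ x1 x2 - 2 * Real.exp (-((n:ℝ) * γ))
      = (1 / ((M1:ℝ) * (M2:ℝ))) * (((M1:ℝ) * (M2:ℝ)) * (1 - vhProb W P n M1 M2 γ x1 x2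
          - 2 * Real.exp (-((n:ℝ) * γ)))) := by
        field_simp
    _ ≤ (1 / ((M1:ℝ) * (M2:ℝ))) * ∑ m : Fin M1 × Fin M2, errProb W c m := by
        apply mul_le_mul_of_nonneg_left hfinal
        positivity
end
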